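/- Let N ≥ 1, let λ_1, …, λ_d be distinct positive real numbers, and let Q_0, Q_1, …, Q_N be orthogonal d×d matrices with columns q_{s,k} (k-th column of Q_s). Define the following tuples of d×d matrices, indexed by s = 1, …, N: l^k with components l^k_s = (1/√N) q_{s,k} q_{s−1,k}ᵀ for 1 ≤ k ≤ d; u^{k,l,0} with components u^{k,l,0}_s = sqrt((λ_k² − λ_l²)/(λ_k^{2N} − λ_l^{2N})) λ_k^{s−1} λ_l^{N−s} q_{s,l} q_{s−1,k}ᵀ for 1 ≤ k < l ≤ d; and u^{k,l,N} with components u^{k,l,N}_s = sqrt((λ_k² − λ_l²)/(λ_k^{2N} − λ_l^{2N})) λ_k^{N−s} λ_l^{s−1} q_{s,k} q_{s−1,l}ᵀ for 1 ≤ k < l ≤ d. Then this family of d² tuples is orthonormal with respect to the inner product ⟨Z, W⟩ = Σ_{s=1}^N Tr(Z_sᵀ W_s): each tuple has norm 1 and any two distinct tuples in the family are orthogonal. -/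

import Mathlib

open Matrix

/-- Inner product on `N`-tuples of `d × d` matrices (components indexed `1, …, N`):
`⟨Z, W⟩ = Σ_{s=1}^N Tr(Z_sᵀ W_s)`. -/
noncomputable def tupleInner {d : ℕ} (N : ℕ) (Z W : ℕ → Matrix (Fin d) (Fin d) ℝ) : ℝ :=
  ∑ s ∈ Finset.Icc 1 N, ((Z s)ᵀ * W s).trace

/-- The tuple `l^k` with components `l^k_s = (1/√N) q_{s,k} q_{s−1,k}ᵀ`. -/
noncomputable def lTuple {d : ℕ} (N : ℕ) (Q : ℕ → Matrix (Fin d) (Fin d) ℝ) (k : Fin d) :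
    ℕ → Matrix (Fin d) (Fin d) ℝ :=
  fun s => (1 / Real.sqrt N) • vecMulVec (fun i => Q s i k) (fun i => Q (s - 1) i k)

/-- The tuple `u^{k,l,0}` with components
`u^{k,l,0}_s = √((λ_k² − λ_l²)/(λ_k^{2N} − λ_l^{2N})) λ_k^{s−1} λ_l^{N−s} q_{s,l} q_{s−1,k}ᵀ`. -/
noncomputable def u0Tuple {d : ℕ} (N : ℕ) (lam : Fin d → ℝ)
    (Q : ℕ → Matrix (Fin d) (Fin d) ℝ) (k l : Fin d) : ℕ → Matrix (Fin d) (Fin d) ℝ :=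
  fun s => (Real.sqrt ((lam k ^ 2 - lam l ^ 2) / (lam k ^ (2 * N) - lam l ^ (2 * N))) *
      lam k ^ (s - 1) * lam l ^ (N - s)) •
    vecMulVec (fun i => Q s i l) (fun i => Q (s - 1) i k)

/-- The tuple `u^{k,l,N}` with components
`u^{k,l,N}_s = √((λ_k² − λ_l²)/(λ_k^{2N} − λ_l^{2N})) λ_k^{N−s} λ_l^{s−1} q_{s,k} q_{s−1,l}ᵀ`. -/
noncomputable def uNTuple {d : ℕ} (N : ℕ) (lam : Fin d → ℝ)
    (Q : ℕ → Matrix (Fin d) (Fin d) ℝ) (k l : Fin d) : ℕ → Matrix (Fin d) (Fin d) ℝ :=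
  fun s => (Real.sqrt ((lam k ^ 2 - lam l ^ 2) / (lam k ^ (2 * N) - lam l ^ (2 * N))) *
      lam k ^ (N - s) * lam l ^ (s - 1)) •
    vecMulVec (fun i => Q s i k) (fun i => Q (s - 1) i l)

/-- The whole family of `d²` tuples `{l^k} ∪ {u^{k,l,0}} ∪ {u^{k,l,N}}`, indexed by
`Fin d ⊕ {(k,l) : k < l} ⊕ {(k,l) : k < l}`. -/
noncomputable def dlnHorizontalFamily {d : ℕ} (N : ℕ) (lam : Fin d → ℝ)
    (Q : ℕ → Matrix (Fin d) (Fin d) ℝ) :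
    (Fin d ⊕ ({p : Fin d × Fin d // p.1 < p.2} ⊕ {p : Fin d × Fin d // p.1 < p.2})) →
      ℕ → Matrix (Fin d) (Fin d) ℝ :=
  Sum.elim (lTuple N Q)
    (Sum.elim (fun p => u0Tuple N lam Q p.1.1 p.1.2) (fun p => uNTuple N lam Q p.1.1 p.1.2))

lemma trace_smul_vecMulVec {d : ℕ} (α β : ℝ) (a b a' b' : Fin d → ℝ) :
    ((α • vecMulVec a b)ᵀ * (β • vecMulVec a' b')).trace
      = α * β * (a ⬝ᵥ a') * (b ⬝ᵥ b') := by
  simp only [Matrix.trace, Matrix.diag, Matrix.mul_apply, transpose_apply, Matrix.smul_apply,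
    vecMulVec_apply, smul_eq_mul, dotProduct]
  simp only [Finset.mul_sum, Finset.sum_mul]
  refine Finset.sum_congr rfl fun i _ => ?_
  refine Finset.sum_congr rfl fun m _ => ?_
  ring

lemma col_dot {d : ℕ} (Q : Matrix (Fin d) (Fin d) ℝ) (h : Qᵀ * Q = 1) (k l : Fin d) :
    (fun i => Q i k) ⬝ᵥ (fun i => Q i l) = if k = l then 1 else 0 := by
  have := congrArg (fun M => M k l) h
  simpa [mul_apply, dotProduct, one_apply] using this

lemma tupleInner_rank1' {d N : ℕ} (Q : ℕ → Matrix (Fin d) (Fin d) ℝ)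
    (hQ : ∀ p, p ≤ N → (Q p)ᵀ * Q p = 1) (Z W : ℕ → Matrix (Fin d) (Fin d) ℝ)
    (c c' : ℕ → ℝ) (a b a' b' : Fin d)
    (hZ : ∀ s, Z s = c s • vecMulVec (fun i => Q s i a) (fun i => Q (s-1) i b))
    (hW : ∀ s, W s = c' s • vecMulVec (fun i => Q s i a') (fun i => Q (s-1) i b')) :
    tupleInner N Z W =
    ((if a = a' then (1:ℝ) else 0) * (if b = b' then 1 else 0)) *
      ∑ s ∈ Finset.Icc 1 N, c s * c' s := by
  unfold tupleInner
  rw [Finset.mul_sum]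
  refine Finset.sum_congr rfl fun s hs => ?_
  obtain ⟨h1, h2⟩ := Finset.mem_Icc.mp hs
  rw [hZ, hW, trace_smul_vecMulVec, col_dot (Q s) (hQ s h2),
    col_dot (Q (s-1)) (hQ (s-1) (le_trans (Nat.sub_le s 1) h2))]
  ring

lemma geomIcc (N : ℕ) (A B : ℝ) :
    (∑ s ∈ Finset.Icc 1 N, A^(s-1) * B^(N-s)) * (A - B) = A^N - B^N := by
  rw [← Finset.Ico_add_one_right_eq_Icc, Finset.sum_Ico_eq_sum_range]
  have h1 : N + 1 - 1 = N := by omega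
  rw [h1]
  have h2 : ∀ i, A^(1+i-1) * B^(N-(1+i)) = A^i * B^(N-1-i) := by
    intro i; congr 1 <;> congr 1 <;> omega
  rw [Finset.sum_congr rfl fun i _ => h2 i]
  exact geom_sum₂_mul A B N

lemma l_diag_sum {N : ℕ} (hN : 1 ≤ N) :
    ∑ _s ∈ Finset.Icc 1 N, (1 / Real.sqrt N) * (1 / Real.sqrt N) = (1:ℝ) := by
  rw [Finset.sum_const, Nat.card_Icc]
  have h1 : (1 / Real.sqrt N) * (1 / Real.sqrt N) = 1 / (N:ℝ) := by
    rw [div_mul_div_comm, one_mul, Real.mul_self_sqrt (Nat.cast_nonneg N)]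
  rw [h1]
  have hN0 : (N:ℝ) ≠ 0 := Nat.cast_ne_zero.mpr (by omega)
  simp only [Nat.add_sub_cancel]
  rw [nsmul_eq_mul, mul_one_div, div_self hN0]

lemma u0_diag_sum {N : ℕ} (hN : 1 ≤ N) {x y : ℝ} (hx : 0 < x) (hy : 0 < y) (hxy : x ≠ y) :
    ∑ s ∈ Finset.Icc 1 N,
      (Real.sqrt ((x^2 - y^2)/(x^(2*N) - y^(2*N))) * x^(s-1) * y^(N-s)) *
      (Real.sqrt ((x^2 - y^2)/(x^(2*N) - y^(2*N))) * x^(s-1) * y^(N-s)) = 1 := by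
  have hxN : x^(2*N) = (x^2)^N := pow_mul x 2 N
  have hyN : y^(2*N) = (y^2)^N := pow_mul y 2 N
  have hlt : (x^2 < y^2 ∧ (x^2)^N < (y^2)^N) ∨ (y^2 < x^2 ∧ (y^2)^N < (x^2)^N) := by
    rcases hxy.lt_or_gt with h | h
    · left
      have h2 : x^2 < y^2 := by nlinarith
      exact ⟨h2, pow_lt_pow_left₀ h2 (by positivity) (by omega)⟩
    · right
      have h2 : y^2 < x^2 := by nlinarith
      exact ⟨h2, pow_lt_pow_left₀ h2 (by positivity) (by omega)⟩
  have hAB : x^2 - y^2 ≠ 0 := by rcases hlt with ⟨h,_⟩|⟨h,_⟩ <;> intro hc <;> nlinarith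
  have hABN : (x^2)^N - (y^2)^N ≠ 0 := by
    rcases hlt with ⟨_,h⟩|⟨_,h⟩ <;> intro hc <;> nlinarith
  have hr : 0 ≤ (x^2 - y^2)/(x^(2*N) - y^(2*N)) := by
    rw [hxN, hyN]
    rcases hlt with ⟨h1,h2⟩|⟨h1,h2⟩
    · exact le_of_lt (div_pos_iff.mpr (Or.inr ⟨by linarith, by linarith⟩))
    · exact le_of_lt (div_pos_iff.mpr (Or.inl ⟨by linarith, by linarith⟩))
  have hsq : ∀ (a:ℝ) (m:ℕ), a^m * a^m = (a^2)^m := fun a m => by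
    rw [← pow_add, ← pow_mul, two_mul]
  have step : ∑ s ∈ Finset.Icc 1 N,
      (Real.sqrt ((x^2 - y^2)/(x^(2*N) - y^(2*N))) * x^(s-1) * y^(N-s)) *
      (Real.sqrt ((x^2 - y^2)/(x^(2*N) - y^(2*N))) * x^(s-1) * y^(N-s))
      = ((x^2 - y^2)/((x^2)^N - (y^2)^N)) *
          ∑ s ∈ Finset.Icc 1 N, (x^2)^(s-1) * (y^2)^(N-s) := by
    rw [Finset.mul_sum]
    refine Finset.sum_congr rfl fun s _ => ?_
    have hself := Real.mul_self_sqrt hr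
    calc (Real.sqrt ((x^2 - y^2)/(x^(2*N) - y^(2*N))) * x^(s-1) * y^(N-s)) *
      (Real.sqrt ((x^2 - y^2)/(x^(2*N) - y^(2*N))) * x^(s-1) * y^(N-s))
        = (Real.sqrt ((x^2 - y^2)/(x^(2*N) - y^(2*N))) *
            Real.sqrt ((x^2 - y^2)/(x^(2*N) - y^(2*N))))
          * ((x^(s-1) * x^(s-1)) * (y^(N-s) * y^(N-s))) := by ring
      _ = ((x^2 - y^2)/((x^2)^N - (y^2)^N)) * ((x^2)^(s-1) * (y^2)^(N-s)) := by
          rw [hself, hsq, hsq, hxN, hyN]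
  rw [step]
  have hsum : ∑ s ∈ Finset.Icc 1 N, (x^2)^(s-1) * (y^2)^(N-s)
      = ((x^2)^N - (y^2)^N) / (x^2 - y^2) := by
    rw [eq_div_iff hAB]; exact geomIcc N _ _
  rw [hsum]
  field_simp

lemma uN_diag_sum {N : ℕ} (hN : 1 ≤ N) {x y : ℝ} (hx : 0 < x) (hy : 0 < y) (hxy : x ≠ y) :
    ∑ s ∈ Finset.Icc 1 N,
      (Real.sqrt ((x^2 - y^2)/(x^(2*N) - y^(2*N))) * x^(N-s) * y^(s-1)) *
      (Real.sqrt ((x^2 - y^2)/(x^(2*N) - y^(2*N))) * x^(N-s) * y^(s-1)) = 1 := by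
  have harg : (x^2 - y^2)/(x^(2*N) - y^(2*N)) = (y^2 - x^2)/(y^(2*N) - x^(2*N)) := by
    rw [← neg_div_neg_eq]; ring_nf
  calc ∑ s ∈ Finset.Icc 1 N,
      (Real.sqrt ((x^2 - y^2)/(x^(2*N) - y^(2*N))) * x^(N-s) * y^(s-1)) *
      (Real.sqrt ((x^2 - y^2)/(x^(2*N) - y^(2*N))) * x^(N-s) * y^(s-1))
      = ∑ s ∈ Finset.Icc 1 N,
      (Real.sqrt ((y^2 - x^2)/(y^(2*N) - x^(2*N))) * y^(s-1) * x^(N-s)) *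
      (Real.sqrt ((y^2 - x^2)/(y^(2*N) - x^(2*N))) * y^(s-1) * x^(N-s)) :=
        Finset.sum_congr rfl fun s _ => by rw [harg]; ring
    _ = 1 := u0_diag_sum hN hy hx hxy.symm

/-- For `N ≥ 1`, distinct positive `λ_1, …, λ_d`, and orthogonal
`Q_0, …, Q_N`, the family of `d²` tuples `{l^k}`, `{u^{k,l,0}}_{k<l}`, `{u^{k,l,N}}_{k<l}`
is orthonormal for the inner product `⟨Z, W⟩ = Σ_{s=1}^N Tr(Z_sᵀ W_s)`: each tuple has
norm `1` and distinct tuples are orthogonal. -/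
theorem dlnHorizontalFamily_orthonormal {d N : ℕ} (hN : 1 ≤ N)
    (lam : Fin d → ℝ) (hpos : ∀ k, 0 < lam k) (hinj : Function.Injective lam)
    (Q : ℕ → Matrix (Fin d) (Fin d) ℝ)
    (hQ : ∀ p, p ≤ N → (Q p)ᵀ * Q p = 1) :
    ∀ i j, tupleInner N (dlnHorizontalFamily N lam Q i) (dlnHorizontalFamily N lam Q j) =
      if i = j then 1 else 0 := by
  intro i j
  have hlam : ∀ {a b : Fin d}, a < b → lam a ≠ lam b :=
    fun {a b} h he => (ne_of_lt h) (hinj he)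
  rcases i with k | (⟨⟨k,l⟩,hkl⟩ | ⟨⟨k,l⟩,hkl⟩) <;>
    rcases j with k' | (⟨⟨k',l'⟩,hkl'⟩ | ⟨⟨k',l'⟩,hkl'⟩)
  · -- l vs l
    refine (tupleInner_rank1' Q hQ _ _ (fun _ => 1/Real.sqrt N) (fun _ => 1/Real.sqrt N)
      k k k' k' (fun s => rfl) (fun s => rfl)).trans ?_
    by_cases h : k = k'
    · subst h
      simp only [if_pos rfl, one_mul, Sum.inl.injEq]
      simp only [if_true, one_mul]
      exact l_diag_sum hN
    · simp [h]
  · -- l vs u0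
    refine (tupleInner_rank1' Q hQ _ _ (fun _ => 1/Real.sqrt N)
      (fun s => Real.sqrt ((lam k' ^ 2 - lam l' ^ 2) / (lam k' ^ (2 * N) - lam l' ^ (2 * N))) *
        lam k' ^ (s - 1) * lam l' ^ (N - s))
      k k l' k' (fun s => rfl) (fun s => rfl)).trans ?_
    have hne : ¬(k = l' ∧ k = k') := by rintro ⟨rfl, rfl⟩; exact lt_irrefl _ hkl'
    rcases not_and_or.mp hne with h | h <;> simp [h]
  · -- l vs uN
    refine (tupleInner_rank1' Q hQ _ _ (fun _ => 1/Real.sqrt N)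
      (fun s => Real.sqrt ((lam k' ^ 2 - lam l' ^ 2) / (lam k' ^ (2 * N) - lam l' ^ (2 * N))) *
        lam k' ^ (N - s) * lam l' ^ (s - 1))
      k k k' l' (fun s => rfl) (fun s => rfl)).trans ?_
    have hne : ¬(k = k' ∧ k = l') := by rintro ⟨rfl, rfl⟩; exact lt_irrefl _ hkl'
    rcases not_and_or.mp hne with h | h <;> simp [h]
  · -- u0 vs l
    refine (tupleInner_rank1' Q hQ _ _
      (fun s => Real.sqrt ((lam k ^ 2 - lam l ^ 2) / (lam k ^ (2 * N) - lam l ^ (2 * N))) *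
        lam k ^ (s - 1) * lam l ^ (N - s))
      (fun _ => 1/Real.sqrt N)
      l k k' k' (fun s => rfl) (fun s => rfl)).trans ?_
    have hne : ¬(l = k' ∧ k = k') := by rintro ⟨rfl, rfl⟩; exact lt_irrefl _ hkl
    rcases not_and_or.mp hne with h | h <;> simp [h]
  · -- u0 vs u0
    refine (tupleInner_rank1' Q hQ _ _
      (fun s => Real.sqrt ((lam k ^ 2 - lam l ^ 2) / (lam k ^ (2 * N) - lam l ^ (2 * N))) *
        lam k ^ (s - 1) * lam l ^ (N - s))
      (fun s => Real.sqrt ((lam k' ^ 2 - lam l' ^ 2) / (lam k' ^ (2 * N) - lam l' ^ (2 * N))) *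
        lam k' ^ (s - 1) * lam l' ^ (N - s))
      l k l' k' (fun s => rfl) (fun s => rfl)).trans ?_
    by_cases h1 : k = k'
    · by_cases h2 : l = l'
      · subst h1; subst h2
        simp only [if_pos rfl, one_mul]
        simp only [if_true, one_mul]
        exact u0_diag_sum hN (hpos k) (hpos l) (hlam hkl)
      · simp [h2]
    · simp [h1]
  · -- u0 vs uN
    refine (tupleInner_rank1' Q hQ _ _
      (fun s => Real.sqrt ((lam k ^ 2 - lam l ^ 2) / (lam k ^ (2 * N) - lam l ^ (2 * N))) *
        lam k ^ (s - 1) * lam l ^ (N - s))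
      (fun s => Real.sqrt ((lam k' ^ 2 - lam l' ^ 2) / (lam k' ^ (2 * N) - lam l' ^ (2 * N))) *
        lam k' ^ (N - s) * lam l' ^ (s - 1))
      l k k' l' (fun s => rfl) (fun s => rfl)).trans ?_
    have hne : ¬(l = k' ∧ k = l') := by
      rintro ⟨rfl, rfl⟩; exact absurd hkl (lt_asymm hkl')
    rcases not_and_or.mp hne with h | h <;> simp [h]
  · -- uN vs l
    refine (tupleInner_rank1' Q hQ _ _
      (fun s => Real.sqrt ((lam k ^ 2 - lam l ^ 2) / (lam k ^ (2 * N) - lam l ^ (2 * N))) *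
        lam k ^ (N - s) * lam l ^ (s - 1))
      (fun _ => 1/Real.sqrt N)
      k l k' k' (fun s => rfl) (fun s => rfl)).trans ?_
    have hne : ¬(k = k' ∧ l = k') := by rintro ⟨rfl, rfl⟩; exact lt_irrefl _ hkl
    rcases not_and_or.mp hne with h | h <;> simp [h]
  · -- uN vs u0
    refine (tupleInner_rank1' Q hQ _ _
      (fun s => Real.sqrt ((lam k ^ 2 - lam l ^ 2) / (lam k ^ (2 * N) - lam l ^ (2 * N))) *
        lam k ^ (N - s) * lam l ^ (s - 1))
      (fun s => Real.sqrt ((lam k' ^ 2 - lam l' ^ 2) / (lam k' ^ (2 * N) - lam l' ^ (2 * N))) *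
        lam k' ^ (s - 1) * lam l' ^ (N - s))
      k l l' k' (fun s => rfl) (fun s => rfl)).trans ?_
    have hne : ¬(k = l' ∧ l = k') := by
      rintro ⟨rfl, rfl⟩; exact absurd hkl (lt_asymm hkl')
    rcases not_and_or.mp hne with h | h <;> simp [h]
  · -- uN vs uN
    refine (tupleInner_rank1' Q hQ _ _
      (fun s => Real.sqrt ((lam k ^ 2 - lam l ^ 2) / (lam k ^ (2 * N) - lam l ^ (2 * N))) *
        lam k ^ (N - s) * lam l ^ (s - 1))
      (fun s => Real.sqrt ((lam k' ^ 2 - lam l' ^ 2) / (lam k' ^ (2 * N) - lam l' ^ (2 * N))) *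
        lam k' ^ (N - s) * lam l' ^ (s - 1))
      k l k' l' (fun s => rfl) (fun s => rfl)).trans ?_
    by_cases h1 : k = k'
    · by_cases h2 : l = l'
      · subst h1; subst h2
        simp only [if_pos rfl, one_mul]
        simp only [if_true, one_mul]
        exact uN_diag_sum hN (hpos k) (hpos l) (hlam hkl)
      · simp [h2]
    · simp [h1]
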